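/- Let Z be the density process of an equivalent σ-martingale measure Q for S with dQ/dP ∈ L^2(P). Then for every ϑ ∈ Θ and every t ∈ [0,T], E[(1 + ∫_t^T ϑ_r dS_r)^2 | F_t] ≥ Z_t^2 / E[Z_T^2 | F_t] P-a.s. -/

import Mathlib

open MeasureTheory

lemma memLp_mul_int {Ω : Type*} {m : MeasurableSpace Ω} {μ : Measure Ω}
    {X Y : Ω → ℝ} (hX : MemLp X 2 μ) (hY : MemLp Y 2 μ) :
    Integrable (fun ω => X ω * Y ω) μ := by
  have h : MemLp (X • Y) 1 μ := hY.smul hX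
  exact memLp_one_iff_integrable.mp h

lemma condExp_cauchy_schwarz {Ω : Type*} {m : MeasurableSpace Ω} {μ : Measure Ω} [IsFiniteMeasure μ]
    {m' : MeasurableSpace Ω} (hm : m' ≤ m)
    {X Y : Ω → ℝ} (hX : MemLp X 2 μ) (hY : MemLp Y 2 μ) :
    ∀ᵐ ω ∂μ, ((μ[fun ω => X ω * Y ω | m']) ω) ^ 2 ≤
      ((μ[fun ω => X ω ^ 2 | m']) ω) * ((μ[fun ω => Y ω ^ 2 | m']) ω) := by
  have hXY : Integrable (fun ω => X ω * Y ω) μ := memLp_mul_int hX hY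
  have hX2 : Integrable (fun ω => X ω ^ 2) μ := hX.integrable_sq
  have hY2 : Integrable (fun ω => Y ω ^ 2) μ := hY.integrable_sq
  have key : ∀ c : ℚ, ∀ᵐ ω ∂μ,
      0 ≤ ((μ[fun ω => Y ω ^ 2 | m']) ω) * (c:ℝ) ^ 2 +
        (-(2 * (μ[fun ω => X ω * Y ω | m']) ω)) * (c:ℝ) +
        ((μ[fun ω => X ω ^ 2 | m']) ω) := by
    intro c
    have hnn : (0 : Ω → ℝ) ≤ᵐ[μ] μ[fun ω => (X ω - (c:ℝ) * Y ω) ^ 2 | m'] :=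
      condExp_nonneg (ae_of_all μ fun ω => sq_nonneg _)
    have heq : μ[fun ω => (X ω - (c:ℝ) * Y ω) ^ 2 | m'] =ᵐ[μ]
        fun ω => ((μ[fun ω => X ω ^ 2 | m']) ω) -
          (2 * (c:ℝ)) * ((μ[fun ω => X ω * Y ω | m']) ω) +
          (c:ℝ) ^ 2 * ((μ[fun ω => Y ω ^ 2 | m']) ω) := by
      have h0 : (fun ω => (X ω - (c:ℝ) * Y ω) ^ 2) =
          fun ω => (X ω ^ 2 - (2 * (c:ℝ)) * (X ω * Y ω)) + (c:ℝ) ^ 2 * Y ω ^ 2 := by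
        funext ω; ring
      rw [h0]
      have hint1 : Integrable (fun ω => X ω ^ 2 - (2 * (c:ℝ)) * (X ω * Y ω)) μ :=
        hX2.sub (hXY.const_mul _)
      have hint2 : Integrable (fun ω => (c:ℝ) ^ 2 * Y ω ^ 2) μ := hY2.const_mul _
      refine (condExp_add hint1 hint2 _).trans ?_
      have hA : μ[fun ω => X ω ^ 2 - (2 * (c:ℝ)) * (X ω * Y ω) | m'] =ᵐ[μ]
          fun ω => ((μ[fun ω => X ω ^ 2 | m']) ω) -
            (2 * (c:ℝ)) * ((μ[fun ω => X ω * Y ω | m']) ω) := by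
        refine (condExp_sub hX2 (hXY.const_mul _) _).trans ?_
        have := condExp_smul (μ := μ) (m := m') (2 * (c:ℝ)) (fun ω => X ω * Y ω)
        filter_upwards [this] with ω hω
        simp only [Pi.sub_apply]
        rw [show (μ[(2 * (c:ℝ)) • fun ω => X ω * Y ω | m']) = (μ[fun ω => (2 * (c:ℝ)) * (X ω * Y ω) | m']) by rfl] at hω
        rw [hω]; simp [smul_eq_mul]
      have hB : μ[fun ω => (c:ℝ) ^ 2 * Y ω ^ 2 | m'] =ᵐ[μ]
          fun ω => (c:ℝ) ^ 2 * ((μ[fun ω => Y ω ^ 2 | m']) ω) := by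
        have := condExp_smul (μ := μ) (m := m') ((c:ℝ) ^ 2) (fun ω => Y ω ^ 2)
        filter_upwards [this] with ω hω
        rw [show (μ[((c:ℝ)^2) • fun ω => Y ω ^ 2 | m']) = (μ[fun ω => (c:ℝ)^2 * Y ω ^ 2 | m']) by rfl] at hω
        rw [hω]; simp [smul_eq_mul]
      filter_upwards [hA, hB] with ω h1 h2
      simp only [Pi.add_apply]; rw [h1, h2]
    filter_upwards [hnn, heq] with ω h1 h2
    have := h1.trans_eq h2
    simp only [Pi.zero_apply] at this ⊢
    nlinarith [this]
  have hall : ∀ᵐ ω ∂μ, ∀ c : ℚ,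
      0 ≤ ((μ[fun ω => Y ω ^ 2 | m']) ω) * (c:ℝ) ^ 2 +
        (-(2 * (μ[fun ω => X ω * Y ω | m']) ω)) * (c:ℝ) +
        ((μ[fun ω => X ω ^ 2 | m']) ω) := ae_all_iff.mpr key
  filter_upwards [hall] with ω hω
  set A := (μ[fun ω => Y ω ^ 2 | m']) ω
  set B := (μ[fun ω => X ω * Y ω | m']) ω
  set C := (μ[fun ω => X ω ^ 2 | m']) ω
  have hreal : ∀ x : ℝ, 0 ≤ A * (x * x) + (-(2 * B)) * x + C := by
    intro x
    have hclosed : IsClosed {x : ℝ | 0 ≤ A * (x * x) + (-(2 * B)) * x + C} :=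
      isClosed_le continuous_const (by continuity)
    have hdense : Dense (Set.range ((↑) : ℚ → ℝ)) := Rat.denseRange_cast
    have : closure (Set.range ((↑) : ℚ → ℝ)) ⊆ {x : ℝ | 0 ≤ A * (x * x) + (-(2 * B)) * x + C} :=
      hclosed.closure_subset_iff.mpr (by rintro _ ⟨q, rfl⟩; have := hω q; simpa [sq] using this)
    exact this (by rw [hdense.closure_eq]; trivial)
  have hd := discrim_le_zero hreal
  rw [discrim] at hd
  nlinarith [hd]

/-- key estimate (2.4) in Lemma 2.1.  `ZT = dQ/dP` is the
square-integrable density of an equivalent σ-martingale measure `Q` for `S`;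
its density process is `Z_t = E[Z_T | F_t]`.  `Gfrom ϑ t` represents `∫_t^T ϑ_r dS_r`;
since `ϑ·S` is a true `Q`-martingale, `E[Z_T · ∫_t^T ϑ dS | F_t] = 0` (`hQmart`).
Conclusion: `E[(1 + ∫_t^T ϑ dS)² | F_t] ≥ Z_t² / E[Z_T² | F_t]` a.s. -/
theorem conditional_lower_bound_via_density
    {Ω : Type*} {m : MeasurableSpace Ω} (μ : Measure Ω) [IsProbabilityMeasure μ]
    (F : Filtration ℝ m) (T : ℝ) (hT : 0 ≤ T)
    (ZT : Ω → ℝ) (hZpos : ∀ᵐ ω ∂μ, 0 < ZT ω) (hZ2 : MemLp ZT 2 μ)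
    (hZ1 : ∫ ω, ZT ω ∂μ = 1)
    (Θ : Type*) (Gfrom : Θ → ℝ → Ω → ℝ)
    (hG2 : ∀ ϑ t, MemLp (Gfrom ϑ t) 2 μ)
    (hQmart : ∀ (ϑ : Θ) (t : ℝ), 0 ≤ t → t ≤ T →
      μ[fun ω => ZT ω * Gfrom ϑ t ω | F t] =ᵐ[μ] 0) :
    ∀ (ϑ : Θ) (t : ℝ), 0 ≤ t → t ≤ T →
      (fun ω => ((μ[ZT | F t]) ω) ^ 2 / (μ[fun ω' => (ZT ω') ^ 2 | F t]) ω)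
        ≤ᵐ[μ] μ[fun ω => (1 + Gfrom ϑ t ω) ^ 2 | F t] := by
  intro ϑ t ht0 htT
  have hY2 : MemLp (fun ω => 1 + Gfrom ϑ t ω) 2 μ := (memLp_const (1 : ℝ)).add (hG2 ϑ t)
  have hcs := condExp_cauchy_schwarz (m' := F t) (μ := μ) (F.le t) hZ2 hY2
  have hZint : Integrable ZT μ := hZ2.integrable one_le_two
  have hZG : Integrable (fun ω => ZT ω * Gfrom ϑ t ω) μ := memLp_mul_int hZ2 (hG2 ϑ t)
  have heq : μ[fun ω => ZT ω * (1 + Gfrom ϑ t ω) | F t] =ᵐ[μ] μ[ZT | F t] := by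
    have h0 : (fun ω => ZT ω * (1 + Gfrom ϑ t ω)) =
        fun ω => ZT ω + ZT ω * Gfrom ϑ t ω := by funext ω; ring
    calc μ[fun ω => ZT ω * (1 + Gfrom ϑ t ω) | F t]
        = μ[fun ω => ZT ω + ZT ω * Gfrom ϑ t ω | F t] := by rw [h0]
      _ =ᵐ[μ] μ[ZT | F t] + μ[fun ω => ZT ω * Gfrom ϑ t ω | F t] := condExp_add hZint hZG _
      _ =ᵐ[μ] μ[ZT | F t] + (0 : Ω → ℝ) := by
          filter_upwards [hQmart ϑ t ht0 htT] with ω hω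
          simp only [Pi.add_apply]; rw [hω]
      _ = μ[ZT | F t] := by simp
  have hb : (0 : Ω → ℝ) ≤ᵐ[μ] μ[fun ω' => (ZT ω') ^ 2 | F t] :=
    condExp_nonneg (ae_of_all μ fun ω => sq_nonneg _)
  have hc : (0 : Ω → ℝ) ≤ᵐ[μ] μ[fun ω => (1 + Gfrom ϑ t ω) ^ 2 | F t] :=
    condExp_nonneg (ae_of_all μ fun ω => sq_nonneg _)
  filter_upwards [hcs, heq, hb, hc] with ω h1 h2 h3 h4
  simp only [Pi.zero_apply] at h3 h4
  rw [h2] at h1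
  by_cases hb0 : (μ[fun ω' => (ZT ω') ^ 2 | F t]) ω = 0
  · rw [hb0, div_zero]; exact h4
  · have hbpos : 0 < (μ[fun ω' => (ZT ω') ^ 2 | F t]) ω := lt_of_le_of_ne h3 (Ne.symm hb0)
    rw [div_le_iff₀ hbpos]
    nlinarith [h1]
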